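/- Main Theorem (nonexistence of everywhere-regular solutions): there is no nontrivial solution of system (10). Precisely, if (χ, a, f, Q) is a solution of system (10) on (0,∞) satisfying conditions (C1) and (C2), and moreover a is bounded on (0,∞) and the function P(ρ) = Q(ρ)/ρ² is bounded on (0,∞), then Q ≡ 0 on (0,∞). -/

import Mathlib

open Real Filter Topology Set

/-- **Main Theorem.** Nonexistence of everywhere-regular solutions:
if `(χ, a, f, Q)` solves system (10) on `(0,∞)` under conditions (C1) and (C2),
with `a` bounded on `(0,∞)` and `P(ρ) = Q(ρ)/ρ²` bounded on `(0,∞)`, then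
`Q ≡ 0` on `(0,∞)`. -/
theorem no_nontrivial_regular_solution
    (χ a f Q : ℝ → ℝ) (ε : ℝ) (hε : ε = 1 ∨ ε = -1)
    (hχ : ∀ ρ > (0:ℝ), HasDerivAt χ (a ρ + 1 - Real.cos (χ ρ)) ρ)
    (ha : ∀ ρ > (0:ℝ), HasDerivAt a (-ε * f ρ / ρ ^ 2) ρ)
    (hf : ∀ ρ > (0:ℝ), HasDerivAt f (Q ρ) ρ)
    (hQ : ∀ ρ > (0:ℝ), HasDerivAt Q (-Q ρ * Real.sin (χ ρ)) ρ)
    (hQnn : ∀ ρ > (0:ℝ), 0 ≤ Q ρ)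
    -- Condition (C1)
    (hfbdd : ∃ Mf, ∀ ρ > (0:ℝ), |f ρ| ≤ Mf)
    (hQbdd : ∃ MQ, ∀ ρ > (0:ℝ), |Q ρ| ≤ MQ)
    (hflim : ∃ Lf, Tendsto f atTop (𝓝 Lf))
    -- Condition (C2)
    (hC2 : Tendsto Q atTop (𝓝 0))
    -- regularity at the origin
    (habdd : ∃ Ma, ∀ ρ > (0:ℝ), |a ρ| ≤ Ma)
    (hPbdd : ∃ MP, ∀ ρ > (0:ℝ), Q ρ / ρ ^ 2 ≤ MP) :
    ∀ ρ > (0:ℝ), Q ρ = 0 := by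
  obtain ⟨MP, hMP⟩ := hPbdd
  intro ρ₀ hρ₀
  set h : ℝ → ℝ := fun x => Q x * Real.exp (-x) with hh
  have hder : ∀ x > (0:ℝ),
      HasDerivAt h (-(Q x * (Real.sin (χ x) + 1)) * Real.exp (-x)) x := by
    intro x hx
    have h1 : HasDerivAt (fun y => Q y * Real.exp (-y)) _ x := (hQ x hx).mul ((hasDerivAt_neg x).exp)
    convert h1 using 1
    ring
  have key : ∀ ρ ∈ Set.Ioo (0:ℝ) ρ₀, h ρ₀ ≤ h ρ := by
    intro ρ hρ
    have hanti : AntitoneOn h (Set.Icc ρ ρ₀) := by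
      apply antitoneOn_of_deriv_nonpos (convex_Icc ρ ρ₀)
      · intro x hx
        exact ((hder x (lt_of_lt_of_le hρ.1 hx.1)).continuousAt).continuousWithinAt
      · intro x hx
        rw [interior_Icc] at hx
        exact ((hder x (hρ.1.trans hx.1)).differentiableAt).differentiableWithinAt
      · intro x hx
        rw [interior_Icc] at hx
        rw [(hder x (hρ.1.trans hx.1)).deriv]
        have hQx := hQnn x (hρ.1.trans hx.1)
        have hs : 0 ≤ Real.sin (χ x) + 1 := by nlinarith [Real.neg_one_le_sin (χ x)]
        have hm := mul_nonneg (mul_nonneg hQx hs) (Real.exp_pos (-x)).le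
        nlinarith [hm]
    exact hanti (Set.mem_Icc.mpr ⟨le_refl ρ, hρ.2.le⟩)
      (Set.mem_Icc.mpr ⟨hρ.2.le, le_refl ρ₀⟩) hρ.2.le
  have hbound : ∀ ρ ∈ Set.Ioo (0:ℝ) ρ₀, h ρ₀ ≤ MP * ρ ^ 2 := by
    intro ρ hρ
    have h0 := key ρ hρ
    have he1 : Real.exp (-ρ) ≤ 1 := Real.exp_le_one_iff.mpr (by linarith [hρ.1])
    have hQρ := hQnn ρ hρ.1
    have h1 : h ρ ≤ Q ρ := by
      have : Q ρ * Real.exp (-ρ) ≤ Q ρ * 1 := by nlinarith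
      simpa [hh] using this
    have hρ2 : (0:ℝ) < ρ ^ 2 := pow_pos hρ.1 2
    have h2 : Q ρ ≤ MP * ρ ^ 2 := by
      have hq := hMP ρ hρ.1
      have : Q ρ / ρ ^ 2 * ρ ^ 2 ≤ MP * ρ ^ 2 := by nlinarith
      rwa [div_mul_cancel₀ _ (ne_of_gt hρ2)] at this
    linarith
  have hlim : Tendsto (fun ρ : ℝ => MP * ρ ^ 2) (𝓝[>] (0:ℝ)) (𝓝 0) := by
    have : Tendsto (fun ρ : ℝ => MP * ρ ^ 2) (𝓝 (0:ℝ)) (𝓝 (MP * 0 ^ 2)) := by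
      exact (continuous_const.mul (continuous_pow 2)).tendsto 0
    simpa using this.mono_left nhdsWithin_le_nhds
  have hle : h ρ₀ ≤ 0 := by
    refine ge_of_tendsto hlim ?_
    filter_upwards [Ioo_mem_nhdsGT hρ₀]
      with ρ hρ
    exact hbound ρ hρ
  have hge : 0 ≤ h ρ₀ := mul_nonneg (hQnn ρ₀ hρ₀) (Real.exp_pos _).le
  have hzero : h ρ₀ = 0 := le_antisymm hle hge
  have := Real.exp_pos (-ρ₀)
  have : Q ρ₀ * Real.exp (-ρ₀) = 0 := hzero
  exact (mul_eq_zero.mp this).resolve_right (ne_of_gt (Real.exp_pos _))
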